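/- Optimality of DRL with respect to the variable ordering (Theorem 2): under the hypotheses of the guaranteed-satisfaction theorem, for each i = 1,…,D there is no x' ∈ Ω(Π) such that x'_j = DRL(x̃)_j for all j < i and |x̃_i - x'_i| < |x̃_i - DRL(x̃)_i|. -/

import Mathlib

open scoped Classical

namespace DisjElim

/-- A linear inequality `∑ k, w k * x k + b ≥ 0` over the variables `x_1, …, x_D`. -/
structure Ineq (D : ℕ) where
  w : Fin D → ℝ
  b : ℝ

/-- The value of the linear expression of an inequality at a point. -/
def Ineq.eval {D : ℕ} (ι : Ineq D) (x : Fin D → ℝ) : ℝ := ∑ k, ι.w k * x k + ι.b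

/-- A constraint: a finite disjunction of linear inequalities. -/
abbrev Constraint (D : ℕ) := Finset (Ineq D)

/-- `x` satisfies a constraint iff it satisfies some disjunct. -/
def Constraint.Sat {D : ℕ} (C : Constraint D) (x : Fin D → ℝ) : Prop :=
  ∃ ι ∈ C, ι.eval x ≥ 0

/-- `x` satisfies a set of constraints iff it satisfies every constraint in the set. -/
def SatAll {D : ℕ} (Pi : Finset (Constraint D)) (x : Fin D → ℝ) : Prop :=
  ∀ C ∈ Pi, C.Sat x

/-- The variable `x_i` occurs positively in the constraint. -/
def hasPos {D : ℕ} (i : Fin D) (C : Constraint D) : Prop := ∃ ι ∈ C, 0 < ι.w i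

/-- The variable `x_i` occurs negatively in the constraint. -/
def hasNeg {D : ℕ} (i : Fin D) (C : Constraint D) : Prop := ∃ ι ∈ C, ι.w i < 0

/-- The CP resolution rule on `x_i` between `Ψ` (whose positive-occurrence disjuncts are
resolved) and `Ψ'` (whose negative-occurrence disjuncts are resolved): the disjunction of
all resolvents `φ/w_i(Ψ-part) - φ'/w'_i(Ψ'-part) ≥ 0` together with the remaining
disjuncts `Φ` of `Ψ` and `Φ'` of `Ψ'`. -/
noncomputable def CPres {D : ℕ} (i : Fin D) (Ψ Ψ' : Constraint D) : Constraint D :=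
  ((Ψ.filter (fun ι => 0 < ι.w i)) ×ˢ (Ψ'.filter (fun ι => ι.w i < 0))).image
    (fun p => (⟨fun k => p.1.w k / p.1.w i - p.2.w k / p.2.w i,
                p.1.b / p.1.w i - p.2.b / p.2.w i⟩ : Ineq D))
    ∪ Ψ.filter (fun ι => ¬ 0 < ι.w i) ∪ Ψ'.filter (fun ι => ¬ ι.w i < 0)

/-- `Π_i^+`: constraints with positive and without negative occurrences of `x_i`. -/
noncomputable def posPart {D : ℕ} (i : Fin D) (Pi : Finset (Constraint D)) :
    Finset (Constraint D) :=
  Pi.filter (fun C => hasPos i C ∧ ¬ hasNeg i C)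

/-- `Π_i^-`: constraints with negative and without positive occurrences of `x_i`. -/
noncomputable def negPart {D : ℕ} (i : Fin D) (Pi : Finset (Constraint D)) :
    Finset (Constraint D) :=
  Pi.filter (fun C => ¬ hasPos i C ∧ hasNeg i C)

/-- `Π_i^±`: constraints with both positive and negative occurrences of `x_i`. -/
noncomputable def mixPart {D : ℕ} (i : Fin D) (Pi : Finset (Constraint D)) :
    Finset (Constraint D) :=
  Pi.filter (fun C => hasPos i C ∧ hasNeg i C)

/-- Constraints in which `x_i` does not occur. -/
noncomputable def freePart {D : ℕ} (i : Fin D) (Pi : Finset (Constraint D)) :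
    Finset (Constraint D) :=
  Pi.filter (fun C => ¬ hasPos i C ∧ ¬ hasNeg i C)

/-- `Π_i^k`: the `k`-fold CP resolution of `Π_i^+` against the mixed part `Π_i^±`. -/
noncomputable def iterRes {D : ℕ} (i : Fin D) (pm : Finset (Constraint D))
    (p0 : Finset (Constraint D)) : ℕ → Finset (Constraint D)
  | 0 => p0
  | k + 1 => ((iterRes i pm p0 k) ×ˢ pm).image (fun p => CPres i p.1 p.2)

/-- `Π_i^{++} = ⋃_{k=0}^{|Π_i^±|} Π_i^k`. -/
noncomputable def closurePlus {D : ℕ} (i : Fin D) (Pi : Finset (Constraint D)) :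
    Finset (Constraint D) :=
  (Finset.range ((mixPart i Pi).card + 1)).biUnion
    (fun k => iterRes i (mixPart i Pi) (posPart i Pi) k)

/-- One step of disjunctive variable elimination:
`Π_{i-1} = (Π_i` minus all constraints containing `x_i) ∪
{CPres_i(Ψ, Ψ') : Ψ ∈ Π_i^{++}, Ψ' ∈ Π_i^-}`. -/
noncomputable def elimVar {D : ℕ} (i : Fin D) (Pi : Finset (Constraint D)) :
    Finset (Constraint D) :=
  freePart i Pi ∪ ((closurePlus i Pi) ×ˢ (negPart i Pi)).image (fun p => CPres i p.1 p.2)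

end DisjElim

namespace DisjElim

/-- The elimination sequence: `piSeq Π k` is the paper's `Π_{D-k}`; i.e. `piSeq Π 0 = Π_D = Π`
and `piSeq Π (k+1)` eliminates the variable `x_{D-k}` (0-based index `D-1-k`) from
`piSeq Π k`. In particular `Π_i = piSeq Π (D - i)` and `Π_0 = piSeq Π D`. -/
noncomputable def piSeq {D : ℕ} (Pi : Finset (Constraint D)) : ℕ → Finset (Constraint D)
  | 0 => Pi
  | k + 1 =>
      if h : D - 1 - k < D then elimVar ⟨D - 1 - k, h⟩ (piSeq Pi k) else piSeq Pi k

/-- The feasible set for the single variable `x_i` obtained by substituting the values `v`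
for the other variables into the constraint set. -/
def Feas {D : ℕ} (Pi : Finset (Constraint D)) (i : Fin D) (v : Fin D → ℝ) : Set ℝ :=
  {t : ℝ | SatAll Pi (Function.update v i t)}

/-- Single-variable refinement: return `t` if it is feasible, otherwise the feasible value
nearest to `t` (choosing the closest satisfying left/right boundary, the right one on
ties), expressed via suprema/infima in the extended reals. -/
noncomputable def refine (S : Set ℝ) (t : ℝ) : ℝ :=
  if t ∈ S then t
  else if (t : EReal) - sSup ((fun s : ℝ => (s : EReal)) '' (S ∩ Set.Iio t)) <
      sInf ((fun s : ℝ => (s : EReal)) '' (S ∩ Set.Ioi t)) - (t : EReal) then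
    (sSup ((fun s : ℝ => (s : EReal)) '' (S ∩ Set.Iio t))).toReal
  else
    (sInf ((fun s : ℝ => (s : EReal)) '' (S ∩ Set.Ioi t))).toReal

/-- The forward pass of DRL: `drlAux Π x̃ k` has the first `k` coordinates refined.
At step `k` the coordinate `x_{k+1}` (0-based index `k`) is set to the value of
`Π̃_{k+1}` (the substituted single-variable version of `Π_{k+1} = piSeq Π (D-1-k)`)
nearest to `x̃_{k+1}`. -/
noncomputable def drlAux {D : ℕ} (Pi : Finset (Constraint D)) (x : Fin D → ℝ) :
    ℕ → (Fin D → ℝ)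
  | 0 => x
  | k + 1 =>
      if h : k < D then
        Function.update (drlAux Pi x k) ⟨k, h⟩
          (refine (Feas (piSeq Pi (D - 1 - k)) ⟨k, h⟩ (drlAux Pi x k)) (x ⟨k, h⟩))
      else drlAux Pi x k

/-- The Disjunctive Refinement Layer on `ℝ^D`. -/
noncomputable def DRL {D : ℕ} (Pi : Finset (Constraint D)) (x : Fin D → ℝ) : Fin D → ℝ :=
  drlAux Pi x D

end DisjElim

namespace DisjElim

variable {D : ℕ}

lemma refine_opt (S : Set ℝ) (t s : ℝ) (hs : s ∈ S) : |t - refine S t| ≤ |t - s| := by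
  by_cases ht : t ∈ S
  · rw [refine, if_pos ht]; simp [abs_nonneg]
  rw [refine, if_neg ht]
  set L : Set EReal := (fun s : ℝ => (s : EReal)) '' (S ∩ Set.Iio t) with hL
  set R : Set EReal := (fun s : ℝ => (s : EReal)) '' (S ∩ Set.Ioi t) with hR
  have hLle : sSup L ≤ (t : EReal) := by
    apply sSup_le; rintro x ⟨y, ⟨hy1, hy2⟩, rfl⟩
    exact EReal.coe_le_coe_iff.2 hy2.le
  have hRge : (t : EReal) ≤ sInf R := by
    apply le_sInf; rintro x ⟨y, ⟨hy1, hy2⟩, rfl⟩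
    exact EReal.coe_le_coe_iff.2 hy2.le
  have hst : s ≠ t := fun h => ht (h ▸ hs)
  rcases lt_or_gt_of_ne hst with hlt | hgt
  · have hsL : (s : EReal) ∈ L := ⟨s, ⟨hs, hlt⟩, rfl⟩
    have hsup : (s : EReal) ≤ sSup L := le_sSup hsL
    have hsupnb : sSup L ≠ ⊥ := fun h => by simp [h] at hsup
    have hsupnt : sSup L ≠ ⊤ := fun h => by rw [h] at hLle; simp at hLle
    have hco : (↑(sSup L).toReal : EReal) = sSup L := EReal.coe_toReal hsupnt hsupnb
    set a := (sSup L).toReal with ha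
    have ha1 : s ≤ a := by rw [← EReal.coe_le_coe_iff, hco]; exact hsup
    have ha2 : a ≤ t := by rw [← EReal.coe_le_coe_iff, hco]; exact hLle
    split_ifs with hc
    · rw [abs_of_nonneg (by linarith), abs_of_nonneg (by linarith)]; linarith
    · push_neg at hc
      have h2 : (t : EReal) - sSup L ≤ ((t - s : ℝ) : EReal) := by
        rw [← hco, ← EReal.coe_sub, EReal.coe_le_coe_iff]; linarith
      have h3 : sInf R - (t : EReal) ≤ ((t - s : ℝ) : EReal) := le_trans hc h2
      have hinfnt : sInf R ≠ ⊤ := by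
        intro h; rw [h, EReal.top_sub_coe] at h3; exact ((EReal.coe_lt_top _).not_ge h3)
      have hinfnb : sInf R ≠ ⊥ := fun h => by rw [h] at hRge; simp at hRge
      have hcob : (↑(sInf R).toReal : EReal) = sInf R := EReal.coe_toReal hinfnt hinfnb
      set b := (sInf R).toReal with hb
      have hb1 : t ≤ b := by rw [← EReal.coe_le_coe_iff, hcob]; exact hRge
      have hb2 : b - t ≤ t - s := by
        rw [← EReal.coe_le_coe_iff, EReal.coe_sub, hcob]; exact h3
      rw [abs_of_nonpos (by linarith), abs_of_nonneg (by linarith)]; linarith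
  · have hsR : (s : EReal) ∈ R := ⟨s, ⟨hs, hgt⟩, rfl⟩
    have hinf : sInf R ≤ (s : EReal) := sInf_le hsR
    have hinfnt : sInf R ≠ ⊤ := fun h => by
      rw [h] at hinf; exact ((EReal.coe_lt_top _).not_ge hinf)
    have hinfnb : sInf R ≠ ⊥ := fun h => by rw [h] at hRge; simp at hRge
    have hcob : (↑(sInf R).toReal : EReal) = sInf R := EReal.coe_toReal hinfnt hinfnb
    set b := (sInf R).toReal with hb
    have hb1 : t ≤ b := by rw [← EReal.coe_le_coe_iff, hcob]; exact hRge
    have hb2 : b ≤ s := by rw [← EReal.coe_le_coe_iff, hcob]; exact hinf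
    split_ifs with hc
    · have h2 : (t : EReal) - sSup L ≤ ((s - t : ℝ) : EReal) := by
        apply le_of_lt (lt_of_lt_of_le hc ?_)
        rw [← hcob, ← EReal.coe_sub, EReal.coe_le_coe_iff]; linarith
      have hsupnb : sSup L ≠ ⊥ := by
        intro h; rw [h, EReal.coe_sub_bot] at h2; exact ((EReal.coe_lt_top _).not_ge h2)
      have hsupnt : sSup L ≠ ⊤ := fun h => by rw [h] at hLle; simp at hLle
      have hco : (↑(sSup L).toReal : EReal) = sSup L := EReal.coe_toReal hsupnt hsupnb
      set a := (sSup L).toReal with ha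
      have ha2 : a ≤ t := by rw [← EReal.coe_le_coe_iff, hco]; exact hLle
      have ha3 : t - a ≤ s - t := by
        rw [← EReal.coe_le_coe_iff, EReal.coe_sub, hco]; exact h2
      rw [abs_of_nonneg (by linarith), abs_of_nonpos (by linarith)]; linarith
    · rw [abs_of_nonpos (by linarith), abs_of_nonpos (by linarith)]; linarith

/-- All weights with index ≥ n vanish. -/
def ConGood (n : ℕ) (C : Constraint D) : Prop :=
  ∀ ι ∈ C, ∀ k : Fin D, n ≤ k.val → ι.w k = 0

def NoNegC (i : Fin D) (C : Constraint D) : Prop := ∀ ι ∈ C, 0 ≤ ι.w i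

lemma mem_CPres {i : Fin D} {Ψ Ψ' : Constraint D} {ι : Ineq D} (h : ι ∈ CPres i Ψ Ψ') :
    (∃ a ∈ Ψ, ∃ b ∈ Ψ', 0 < a.w i ∧ b.w i < 0 ∧
      ι = ⟨fun k => a.w k / a.w i - b.w k / b.w i, a.b / a.w i - b.b / b.w i⟩)
    ∨ (ι ∈ Ψ ∧ ¬ 0 < ι.w i) ∨ (ι ∈ Ψ' ∧ ¬ ι.w i < 0) := by
  unfold CPres at h
  simp only [Finset.mem_union, Finset.mem_image, Finset.mem_product, Finset.mem_filter,
    Prod.exists] at h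
  rcases h with (⟨a, b, ⟨⟨ha, hwa⟩, hb, hwb⟩, rfl⟩ | h) | h
  · exact Or.inl ⟨a, ha, b, hb, hwa, hwb, rfl⟩
  · exact Or.inr (Or.inl h)
  · exact Or.inr (Or.inr h)

lemma eval_resolvent {i : Fin D} (a b : Ineq D) (x : Fin D → ℝ) :
    Ineq.eval ⟨fun k => a.w k / a.w i - b.w k / b.w i, a.b / a.w i - b.b / b.w i⟩ x
      = a.eval x / a.w i - b.eval x / b.w i := by
  unfold Ineq.eval
  have h1 : ∑ k, (a.w k / a.w i - b.w k / b.w i) * x k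
      = (∑ k, a.w k * x k) / a.w i - (∑ k, b.w k * x k) / b.w i := by
    rw [Finset.sum_div, Finset.sum_div, ← Finset.sum_sub_distrib]
    exact Finset.sum_congr rfl (fun k _ => by ring)
  rw [h1]; ring

lemma sat_CPres {i : Fin D} {Ψ Ψ' : Constraint D} {x : Fin D → ℝ}
    (h : Ψ.Sat x) (h' : Ψ'.Sat x) : (CPres i Ψ Ψ').Sat x := by
  obtain ⟨a, ha, hae⟩ := h
  obtain ⟨b, hb, hbe⟩ := h'
  by_cases hwa : 0 < a.w i
  · by_cases hwb : b.w i < 0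
    · refine ⟨⟨fun k => a.w k / a.w i - b.w k / b.w i, a.b / a.w i - b.b / b.w i⟩, ?_, ?_⟩
      · unfold CPres
        refine Finset.mem_union_left _ (Finset.mem_union_left _ ?_)
        refine Finset.mem_image.2 ⟨(a, b), ?_, rfl⟩
        exact Finset.mem_product.2 ⟨Finset.mem_filter.2 ⟨ha, hwa⟩, Finset.mem_filter.2 ⟨hb, hwb⟩⟩
      · rw [eval_resolvent]
        have h1 : 0 ≤ a.eval x / a.w i := div_nonneg hae hwa.le
        have h2 : b.eval x / b.w i ≤ 0 := div_nonpos_iff.2 (Or.inl ⟨hbe, hwb.le⟩)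
        linarith
    · refine ⟨b, ?_, hbe⟩
      unfold CPres
      exact Finset.mem_union_right _ (Finset.mem_filter.2 ⟨hb, hwb⟩)
  · refine ⟨a, ?_, hae⟩
    unfold CPres
    exact Finset.mem_union_left _
      (Finset.mem_union_right _ (Finset.mem_filter.2 ⟨ha, hwa⟩))

lemma CPres_keep {i : Fin D} {Ψ Ψ' : Constraint D}
    (h1 : ConGood (i.val + 1) Ψ) (hn : NoNegC i Ψ) (h2 : ConGood (i.val + 1) Ψ') :
    ConGood (i.val + 1) (CPres i Ψ Ψ') ∧ NoNegC i (CPres i Ψ Ψ') := by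
  constructor
  · intro ι hι k hk
    rcases mem_CPres hι with ⟨a, ha, b, hb, hwa, hwb, rfl⟩ | ⟨hι', _⟩ | ⟨hι', _⟩
    · show a.w k / a.w i - b.w k / b.w i = 0
      rw [h1 a ha k hk, h2 b hb k hk]; simp
    · exact h1 ι hι' k hk
    · exact h2 ι hι' k hk
  · intro ι hι
    rcases mem_CPres hι with ⟨a, ha, b, hb, hwa, hwb, rfl⟩ | ⟨hι', hw⟩ | ⟨hι', hw⟩
    · show 0 ≤ a.w i / a.w i - b.w i / b.w i
      rw [div_self hwa.ne', div_self hwb.ne]; norm_num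
    · exact hn ι hι'
    · exact not_lt.1 hw

lemma CPres_good {i : Fin D} {Ψ Ψ' : Constraint D}
    (h1 : ConGood (i.val + 1) Ψ) (hn : NoNegC i Ψ) (h2 : ConGood (i.val + 1) Ψ')
    (hp : ∀ ι ∈ Ψ', ι.w i ≤ 0) :
    ConGood i.val (CPres i Ψ Ψ') := by
  have key : ∀ ι ∈ CPres i Ψ Ψ', ι.w i = 0 := by
    intro ι hι
    rcases mem_CPres hι with ⟨a, ha, b, hb, hwa, hwb, rfl⟩ | ⟨hι', hw⟩ | ⟨hι', hw⟩
    · show a.w i / a.w i - b.w i / b.w i = 0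
      rw [div_self hwa.ne', div_self hwb.ne]; norm_num
    · exact le_antisymm (not_lt.1 hw) (hn ι hι')
    · exact le_antisymm (hp ι hι') (not_lt.1 hw)
  intro ι hι k hk
  rcases eq_or_lt_of_le hk with he | hlt
  · have : k = i := Fin.ext he.symm
    subst this; exact key ι hι
  · rcases mem_CPres hι with ⟨a, ha, b, hb, hwa, hwb, rfl⟩ | ⟨hι', _⟩ | ⟨hι', _⟩
    · show a.w k / a.w i - b.w k / b.w i = 0
      rw [h1 a ha k hlt, h2 b hb k hlt]; simp
    · exact h1 ι hι' k hlt
    · exact h2 ι hι' k hlt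

lemma iterRes_spec {i : Fin D} {Q : Finset (Constraint D)}
    (hQ : ∀ C ∈ Q, ConGood (i.val + 1) C) :
    ∀ m, ∀ C ∈ iterRes i (mixPart i Q) (posPart i Q) m,
      ConGood (i.val + 1) C ∧ NoNegC i C := by
  intro m
  induction m with
  | zero =>
    intro C hC
    simp only [iterRes, posPart, Finset.mem_filter] at hC
    obtain ⟨hCQ, hpos, hneg⟩ := hC
    refine ⟨hQ C hCQ, fun ι hι => not_lt.1 fun h => hneg ⟨ι, hι, h⟩⟩
  | succ m ih =>
    intro C hC
    simp only [iterRes, Finset.mem_image, Finset.mem_product, Prod.exists] at hC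
    obtain ⟨a, b, ⟨ha, hb⟩, rfl⟩ := hC
    obtain ⟨hg, hnn⟩ := ih a ha
    have hbQ : b ∈ Q := (Finset.mem_filter.1 hb).1
    exact CPres_keep hg hnn (hQ b hbQ)

lemma iterRes_sat {i : Fin D} {Q : Finset (Constraint D)} {x : Fin D → ℝ}
    (hx : SatAll Q x) :
    ∀ m, ∀ C ∈ iterRes i (mixPart i Q) (posPart i Q) m, C.Sat x := by
  intro m
  induction m with
  | zero =>
    intro C hC
    simp only [iterRes, posPart, Finset.mem_filter] at hC
    exact hx C hC.1
  | succ m ih =>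
    intro C hC
    simp only [iterRes, Finset.mem_image, Finset.mem_product, Prod.exists] at hC
    obtain ⟨a, b, ⟨ha, hb⟩, rfl⟩ := hC
    exact sat_CPres (ih a ha) (hx b (Finset.mem_filter.1 hb).1)

lemma elim_sound {i : Fin D} {Q : Finset (Constraint D)} {x : Fin D → ℝ}
    (hx : SatAll Q x) : SatAll (elimVar i Q) x := by
  intro C hC
  simp only [elimVar, Finset.mem_union, Finset.mem_image, Finset.mem_product,
    Prod.exists] at hC
  rcases hC with hC | ⟨a, b, ⟨ha, hb⟩, rfl⟩
  · exact hx C (Finset.mem_filter.1 hC).1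
  · have haS : a.Sat x := by
      simp only [closurePlus, Finset.mem_biUnion] at ha
      obtain ⟨m, _, ham⟩ := ha
      exact iterRes_sat hx m a ham
    exact sat_CPres haS (hx b (Finset.mem_filter.1 hb).1)

lemma elim_good {i : Fin D} {Q : Finset (Constraint D)}
    (hQ : ∀ C ∈ Q, ConGood (i.val + 1) C) :
    ∀ C ∈ elimVar i Q, ConGood i.val C := by
  intro C hC
  simp only [elimVar, Finset.mem_union, Finset.mem_image, Finset.mem_product,
    Prod.exists] at hC
  rcases hC with hC | ⟨a, b, ⟨ha, hb⟩, rfl⟩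
  · obtain ⟨hCQ, hpos, hneg⟩ := Finset.mem_filter.1 hC
    intro ι hι k hk
    rcases eq_or_lt_of_le hk with he | hlt
    · have : k = i := Fin.ext he.symm
      subst this
      exact le_antisymm (not_lt.1 fun h => hpos ⟨ι, hι, h⟩)
        (not_lt.1 fun h => hneg ⟨ι, hι, h⟩)
    · exact hQ C hCQ ι hι k hlt
  · have hgb : ∀ C ∈ Q, True := fun _ _ => trivial
    obtain ⟨hbQ, hbpos, hbneg⟩ := Finset.mem_filter.1 hb
    have haspec : ConGood (i.val + 1) a ∧ NoNegC i a := by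
      simp only [closurePlus, Finset.mem_biUnion] at ha
      obtain ⟨m, _, ham⟩ := ha
      exact iterRes_spec hQ m a ham
    exact CPres_good haspec.1 haspec.2 (hQ b hbQ)
      (fun ι hι => not_lt.1 fun h => hbpos ⟨ι, hι, h⟩)

lemma piSeq_sound {Pi : Finset (Constraint D)} {x : Fin D → ℝ} (hx : SatAll Pi x) :
    ∀ m, SatAll (piSeq Pi m) x := by
  intro m
  induction m with
  | zero => exact hx
  | succ m ih =>
    show SatAll (piSeq Pi (m + 1)) x
    rw [piSeq]
    split
    · exact elim_sound ih
    · exact ih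

lemma piSeq_good (Pi : Finset (Constraint D)) (hD : 0 < D) :
    ∀ m, m ≤ D → ∀ C ∈ piSeq Pi m, ConGood (D - m) C := by
  intro m
  induction m with
  | zero =>
    intro _ C _ ι _ k hk
    exact absurd hk (by have := k.isLt; omega)
  | succ m ih =>
    intro hm C hC
    have h : D - 1 - m < D := by omega
    rw [piSeq, dif_pos h] at hC
    have hh := elim_good (i := ⟨D - 1 - m, h⟩) (Q := piSeq Pi m) ?_ C hC
    · have hh' : ConGood (D - 1 - m) C := hh
      have e : (D - 1 - m : ℕ) = D - (m + 1) := by omega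
      rwa [e] at hh'
    · have e : (D - 1 - m + 1 : ℕ) = D - m := by omega
      rw [e]
      exact ih (by omega)

lemma eval_congr {ι : Ineq D} {y z : Fin D → ℝ}
    (h : ∀ k, ι.w k ≠ 0 → y k = z k) : ι.eval y = ι.eval z := by
  unfold Ineq.eval
  congr 1
  apply Finset.sum_congr rfl
  intro k _
  by_cases h' : ι.w k = 0
  · simp [h']
  · rw [h k h']

lemma drlAux_stable (Pi : Finset (Constraint D)) (x : Fin D → ℝ) :
    ∀ m n, n ≤ m → ∀ j : Fin D, j.val < n → drlAux Pi x m j = drlAux Pi x n j := by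
  intro m
  induction m with
  | zero =>
    intro n hn j hj
    obtain rfl : n = 0 := Nat.le_zero.1 hn
    rfl
  | succ m ih =>
    intro n hn j hj
    rcases Nat.eq_or_lt_of_le hn with he | hlt
    · rw [he]
    · have hnm : n ≤ m := by omega
      have hjm : j.val < m := by omega
      rw [show drlAux Pi x (m + 1) = _ from rfl]
      rw [drlAux]
      split
      · next h =>
        rw [Function.update_of_ne (by intro hji; rw [hji] at hj; simp at hj; omega)]
        exact ih n hnm j hj
      · exact ih n hnm j hj

end DisjElim


open DisjElim in
/-- Optimality of DRL with respect to the variable ordering (Theorem 2): for a finite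
satisfiable set of constraints `Π` and any sample `xt`, for each coordinate `i` there is no
point `x'` of `Ω(Π)` agreeing with `DRL(xt)` on all earlier coordinates whose `i`-th
coordinate is strictly closer to `xt i` than `DRL(xt) i` is. -/
theorem stmt_16 {D : ℕ} (Pi : Finset (Constraint D)) (hsat : ∃ x, SatAll Pi x)
    (xt : Fin D → ℝ) (i : Fin D) :
    ¬ ∃ x' : Fin D → ℝ, SatAll Pi x' ∧ (∀ j : Fin D, j < i → x' j = DRL Pi xt j) ∧
      |xt i - x' i| < |xt i - DRL Pi xt i| := by
  
  rintro ⟨x', hx'sat, hagree, hlt⟩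
  have hD : 0 < D := i.pos
  set n := i.val with hn
  set Q := piSeq Pi (D - 1 - n) with hQdef
  have hQsat : SatAll Q x' := piSeq_sound hx'sat _
  have hQgood : ∀ C ∈ Q, ConGood (n + 1) C := by
    have h := piSeq_good Pi hD (D - 1 - n) (by omega)
    have e : D - (D - 1 - n) = n + 1 := by have := i.isLt; omega
    rwa [e] at h
  set v := drlAux Pi xt n with hv
  have hvj : ∀ j : Fin D, j.val < n → v j = x' j := by
    intro j hj
    have h1 : drlAux Pi xt D j = drlAux Pi xt n j :=
      drlAux_stable Pi xt D n (by omega) j hj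
    have h2 := hagree j (by rwa [Fin.lt_def])
    rw [h2]
    show drlAux Pi xt n j = DRL Pi xt j
    rw [DRL, h1]
  have hmem : x' i ∈ Feas Q i v := by
    show SatAll Q (Function.update v i (x' i))
    intro C hC
    obtain ⟨ι, hι, hev⟩ := hQsat C hC
    refine ⟨ι, hι, ?_⟩
    have he : ι.eval (Function.update v i (x' i)) = ι.eval x' := by
      apply eval_congr
      intro k hk
      have hkle : k.val ≤ n := by
        by_contra hcon
        exact hk (hQgood C hC ι hι k (by omega))
      rcases eq_or_lt_of_le hkle with heq | hltk
      · have hki : k = i := Fin.ext heq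
        subst hki
        simp
      · rw [Function.update_of_ne (by intro h; rw [h] at hltk; omega)]
        exact hvj k hltk
    rw [he]; exact hev
  have hDRLi : DRL Pi xt i = refine (Feas Q i v) (xt i) := by
    rw [DRL]
    have h1 : drlAux Pi xt D i = drlAux Pi xt (n + 1) i :=
      drlAux_stable Pi xt D (n + 1) (by omega) i (by omega)
    rw [h1, drlAux, dif_pos i.isLt]
    have hfin : (⟨n, i.isLt⟩ : Fin D) = i := Fin.ext rfl
    rw [hfin]
    simp
    rfl
  have hopt := refine_opt (Feas Q i v) (xt i) (x' i) hmem
  rw [hDRLi] at hlt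
  linarith
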